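/- For a finite poset P, the dilated chain polytope C(P,r) is the convex hull of the points r·χ_a where a ranges over antichains of P together with all sums χ_{a_1} + ⋯ + χ_{a_r} of r characteristic functions of antichains; equivalently, C(P,r) is the r-fold Minkowski sum of C(P,1) with itself. -/

import Mathlib

/-- The dilated order polytope `O(P,r)`. -/
def orderPolytope (P : Type*) [PartialOrder P] (r : ℝ) : Set (P → ℝ) :=
  {x | (∀ p, 0 ≤ x p ∧ x p ≤ r) ∧ ∀ p q : P, p ≤ q → x p ≤ x q}

/-- The dilated chain polytope `C(P,r)`. -/
def chainPolytope (P : Type*) [PartialOrder P] (r : ℝ) : Set (P → ℝ) :=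
  {x | (∀ p, 0 ≤ x p) ∧
    ∀ C : Finset P, IsChain (· ≤ ·) (C : Set P) → ∑ p ∈ C, x p ≤ r}

/-- `x` is a lattice (integral) point. -/
def isLatticePoint {P : Type*} (x : P → ℝ) : Prop := ∀ p, ∃ m : ℤ, x p = m

/-- Characteristic function of a finite subset. -/
def chi {P : Type*} [DecidableEq P] (A : Finset P) : P → ℝ :=
  fun p => if p ∈ A then 1 else 0

open Pointwise

section Aux

variable {P : Type*} [PartialOrder P] [Fintype P] [DecidableEq P]

lemma chainPolytope_convex (r : ℝ) : Convex ℝ (chainPolytope P r) := by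
  intro x hx y hy a b ha hb hab
  constructor
  · intro p
    have h1 := hx.1 p; have h2 := hy.1 p
    simp only [Pi.add_apply, Pi.smul_apply, smul_eq_mul]
    nlinarith
  · intro C hC
    have h1 := hx.2 C hC; have h2 := hy.2 C hC
    simp only [Pi.add_apply, Pi.smul_apply, smul_eq_mul]
    rw [Finset.sum_add_distrib, ← Finset.mul_sum, ← Finset.mul_sum]
    have h3 := mul_le_mul_of_nonneg_left h1 ha
    have h4 := mul_le_mul_of_nonneg_left h2 hb
    calc a * ∑ p ∈ C, x p + b * ∑ p ∈ C, y p ≤ a * r + b * r := by linarith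
      _ = r := by rw [← add_mul, hab, one_mul]

lemma smul_mem_chainPolytope {c s : ℝ} (hc : 0 ≤ c) {x : P → ℝ}
    (hx : x ∈ chainPolytope P s) : c • x ∈ chainPolytope P (c * s) := by
  refine ⟨fun p => mul_nonneg hc (hx.1 p), fun C hC => ?_⟩
  simp only [Pi.smul_apply, smul_eq_mul]
  rw [← Finset.mul_sum]
  exact mul_le_mul_of_nonneg_left (hx.2 C hC) hc

lemma chi_mem_chainPolytope {A : Finset P} (hA : IsAntichain (· ≤ ·) (A : Set P)) :
    chi A ∈ chainPolytope P 1 := by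
  classical
  constructor
  · intro p; unfold chi; split <;> norm_num
  · intro C hC
    unfold chi
    rw [Finset.sum_boole]
    have h : (C.filter (· ∈ A)).card ≤ 1 := by
      rw [Finset.card_le_one]
      intro a ha b hb
      simp only [Finset.mem_filter] at ha hb
      by_contra hne
      rcases hC (Finset.mem_coe.2 ha.1) (Finset.mem_coe.2 hb.1) hne with h | h
      · exact hA (Finset.mem_coe.2 ha.2) (Finset.mem_coe.2 hb.2) hne h
      · exact hA (Finset.mem_coe.2 hb.2) (Finset.mem_coe.2 ha.2) (Ne.symm hne) h
    exact_mod_cast h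

lemma exists_maximal_above (s : Finset P) {p : P} (hp : p ∈ s) :
    ∃ a ∈ s, p ≤ a ∧ ∀ q ∈ s, ¬ a < q := by
  classical
  obtain ⟨a, ha, hmax⟩ : ∃ a ∈ s.filter (p ≤ ·), ∀ x ∈ s.filter (p ≤ ·), ¬ a < x := by
    obtain ⟨a, ha, hm⟩ := Finset.exists_maximal (s := s.filter (p ≤ ·))
      ⟨p, Finset.mem_filter.2 ⟨hp, le_refl p⟩⟩
    exact ⟨a, ha, fun x hx hlt => lt_irrefl a (lt_of_lt_of_le hlt (hm hx hlt.le))⟩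
  rw [Finset.mem_filter] at ha
  exact ⟨a, ha.1, ha.2, fun q hq hlt =>
    hmax q (Finset.mem_filter.2 ⟨hq, ha.2.trans hlt.le⟩) hlt⟩

lemma chain_singleton (p : P) : IsChain (· ≤ ·) (({p} : Finset P) : Set P) := by
  rw [Finset.coe_singleton]; exact Set.subsingleton_singleton.isChain

lemma key_aux : ∀ (n : ℕ) (x : P → ℝ),
    (Finset.univ.filter (fun p => x p ≠ 0)).card ≤ n →
    x ∈ chainPolytope P 1 →
    x ∈ convexHull ℝ
      {y : P → ℝ | ∃ A : Finset P, IsAntichain (· ≤ ·) (A : Set P) ∧ y = chi A} := by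
  classical
  intro n
  induction n with
  | zero =>
    intro x hcard hx
    have hz : ∀ p, x p = 0 := by
      intro p
      by_contra h
      have hmem : p ∈ Finset.univ.filter (fun p => x p ≠ 0) :=
        Finset.mem_filter.2 ⟨Finset.mem_univ p, h⟩
      have := Finset.card_pos.2 ⟨p, hmem⟩
      omega
    exact subset_convexHull ℝ _ ⟨∅, by simp [IsAntichain], funext fun p => by simp [chi, hz p]⟩
  | succ n ih =>
    intro x hcard hx
    set supp := Finset.univ.filter (fun p => x p ≠ 0) with hsupp_def
    by_cases hne : supp.Nonempty
    swap
    · refine ih x ?_ hx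
      rw [Finset.not_nonempty_iff_eq_empty] at hne
      rw [← hsupp_def, hne]
      simp
    · set A := supp.filter (fun p => ∀ q ∈ supp, ¬ p < q) with hA_def
      have hAsub : A ⊆ supp := Finset.filter_subset _ _
      have hAanti : IsAntichain (· ≤ ·) (A : Set P) := by
        intro a ha b hb hab hle
        rw [Finset.mem_coe, hA_def, Finset.mem_filter] at ha hb
        exact ha.2 b hb.1 (lt_of_le_of_ne hle hab)
      have hAne : A.Nonempty := by
        obtain ⟨p, hp⟩ := hne
        obtain ⟨a, haS, hpa, hamax⟩ := exists_maximal_above supp hp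
        exact ⟨a, Finset.mem_filter.2 ⟨haS, hamax⟩⟩
      obtain ⟨a0, ha0, hmin⟩ := Finset.exists_min_image A x hAne
      set t := x a0 with ht_def
      have ht0 : 0 < t := by
        have h1 := hx.1 a0
        have h2 : x a0 ≠ 0 := (Finset.mem_filter.1 (hAsub ha0)).2
        exact lt_of_le_of_ne h1 (Ne.symm h2)
      have ht1 : t ≤ 1 := by
        have := hx.2 {a0} (chain_singleton a0)
        simpa using this
      set x' : P → ℝ := x - t • chi A with hx'_def
      have hx'a0 : x' a0 = 0 := by
        simp [hx'_def, chi, ha0, ht_def]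
      have hx'mem : x' ∈ chainPolytope P (1 - t) := by
        constructor
        · intro p
          by_cases hpA : p ∈ A
          · have := hmin p hpA
            simp only [hx'_def, Pi.sub_apply, Pi.smul_apply, smul_eq_mul, chi, if_pos hpA,
              mul_one]
            linarith
          · have := hx.1 p
            simp only [hx'_def, Pi.sub_apply, Pi.smul_apply, smul_eq_mul, chi, if_neg hpA,
              mul_zero]
            linarith
        · intro C hC
          have hsum : ∑ p ∈ C, x' p = (∑ p ∈ C, x p) - t * (C.filter (· ∈ A)).card := by
            simp only [hx'_def, Pi.sub_apply, Pi.smul_apply, smul_eq_mul, chi]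
            rw [Finset.sum_sub_distrib, ← Finset.mul_sum, Finset.sum_boole]
          rw [hsum]
          by_cases hCA : ∃ a ∈ C, a ∈ A
          · obtain ⟨a, haC, haA⟩ := hCA
            have h1 : (1:ℝ) ≤ (C.filter (· ∈ A)).card := by
              have hpos : 0 < (C.filter (· ∈ A)).card :=
                Finset.card_pos.2 ⟨a, Finset.mem_filter.2 ⟨haC, haA⟩⟩
              exact_mod_cast hpos
            have h2 := hx.2 C hC
            nlinarith
          · have hfil : C.filter (· ∈ A) = ∅ :=
              Finset.filter_eq_empty_iff.2 (fun {p} hp hpA => hCA ⟨p, hp, hpA⟩)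
            rw [hfil]
            simp only [Finset.card_empty, Nat.cast_zero, mul_zero, sub_zero]
            set C' := C.filter (fun p => x p ≠ 0) with hC'_def
            have hsumC : ∑ p ∈ C, x p = ∑ p ∈ C', x p := (Finset.sum_filter_ne_zero C).symm
            rw [hsumC]
            by_cases hC'ne : C'.Nonempty
            · obtain ⟨m, hmC', hmmax⟩ : ∃ m ∈ C', ∀ x ∈ C', ¬ m < x := by
                obtain ⟨m, hm1, hm⟩ := Finset.exists_maximal hC'ne
                exact ⟨m, hm1, fun x hx hlt => lt_irrefl m (lt_of_lt_of_le hlt (hm hx hlt.le))⟩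
              have hC'chain : IsChain (· ≤ ·) (C' : Set P) := by
                refine hC.mono ?_
                exact_mod_cast Finset.filter_subset _ _
              have hmtop : ∀ q ∈ C', q ≤ m := by
                intro q hq
                by_cases hqm : q = m
                · exact hqm.le
                · rcases hC'chain (Finset.mem_coe.2 hq) (Finset.mem_coe.2 hmC') hqm with h | h
                  · exact h
                  · exact absurd (lt_of_le_of_ne h (Ne.symm hqm)) (hmmax q hq)
              have hmsupp : m ∈ supp :=
                Finset.mem_filter.2 ⟨Finset.mem_univ m, (Finset.mem_filter.1 hmC').2⟩
              obtain ⟨a, haS, hma, hamax⟩ := exists_maximal_above supp hmsupp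
              have haA : a ∈ A := Finset.mem_filter.2 ⟨haS, hamax⟩
              have haC' : a ∉ C' := fun h => hCA ⟨a, Finset.mem_of_mem_filter a h, haA⟩
              have hchain2 : IsChain (· ≤ ·) ((insert a C' : Finset P) : Set P) := by
                rw [Finset.coe_insert]
                exact hC'chain.insert (fun b hb _ =>
                  Or.inr ((hmtop b (Finset.mem_coe.1 hb)).trans hma))
              have hsum2 := hx.2 (insert a C') hchain2
              rw [Finset.sum_insert haC'] at hsum2
              have hta : t ≤ x a := hmin a haA
              linarith
            · rw [Finset.not_nonempty_iff_eq_empty] at hC'ne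
              rw [hC'ne, Finset.sum_empty]
              linarith
      by_cases htt : t = 1
      · have hx'0 : ∀ p, x' p = 0 := by
          intro p
          have h1 := hx'mem.1 p
          have h2 := hx'mem.2 {p} (chain_singleton p)
          rw [Finset.sum_singleton] at h2
          rw [htt] at h2
          linarith
        have hxA : x = chi A := by
          funext p
          have h := hx'0 p
          simp only [hx'_def, Pi.sub_apply, Pi.smul_apply, smul_eq_mul, htt, one_mul] at h
          linarith
        exact subset_convexHull ℝ _ ⟨A, hAanti, hxA⟩
      · have ht1' : t < 1 := lt_of_le_of_ne ht1 htt
        set y := (1 - t)⁻¹ • x' with hy_def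
        have hyC : y ∈ chainPolytope P 1 := by
          have h := smul_mem_chainPolytope (c := (1-t)⁻¹)
            (inv_nonneg.2 (by linarith)) hx'mem
          rwa [inv_mul_cancel₀ (by linarith : (1:ℝ) - t ≠ 0)] at h
        have hycard : (Finset.univ.filter (fun p => y p ≠ 0)).card ≤ n := by
          have hsub : Finset.univ.filter (fun p => y p ≠ 0) ⊆ supp.erase a0 := by
            intro p hp
            rw [Finset.mem_filter] at hp
            have hx'p : x' p ≠ 0 := by
              intro h; apply hp.2; simp [hy_def, h]
            refine Finset.mem_erase.2 ⟨?_, ?_⟩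
            · rintro rfl; exact hx'p hx'a0
            · refine Finset.mem_filter.2 ⟨Finset.mem_univ p, ?_⟩
              intro hxp
              apply hx'p
              have hpA : p ∉ A := by
                intro h
                exact (Finset.mem_filter.1 (hAsub h)).2 hxp
              simp [hx'_def, chi, hpA, hxp]
          have hcard1 : supp.card ≤ n + 1 := hcard
          calc (Finset.univ.filter (fun p => y p ≠ 0)).card
              ≤ (supp.erase a0).card := Finset.card_le_card hsub
            _ = supp.card - 1 := Finset.card_erase_of_mem (hAsub ha0)
            _ ≤ n := by omega
        have hy_hull := ih y hycard hyC
        have hA_hull : chi A ∈ convexHull ℝ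
            {y : P → ℝ | ∃ A : Finset P, IsAntichain (· ≤ ·) (A : Set P) ∧ y = chi A} :=
          subset_convexHull ℝ _ ⟨A, hAanti, rfl⟩
        have hxeq : x = t • chi A + (1 - t) • y := by
          rw [hy_def, smul_smul, mul_inv_cancel₀ (by linarith : (1:ℝ) - t ≠ 0), one_smul,
            hx'_def]
          abel
        rw [hxeq]
        exact (convex_convexHull ℝ _) hA_hull hy_hull ht0.le (by linarith) (by ring)

end Aux

/-- `C(P,r)` is the convex hull of all sums of `r` characteristic
functions of antichains (including the points `r • χ_a`), and equals the `r`-fold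
Minkowski sum of `C(P,1)` with itself. -/
theorem chain_polytope_dilate_convex_hull (P : Type*) [PartialOrder P] [Fintype P]
    [DecidableEq P] (r : ℕ) (hr : 0 < r) :
    chainPolytope P (r : ℝ)
      = convexHull ℝ {x | ∃ f : Fin r → Finset P,
          (∀ i, IsAntichain (· ≤ ·) ((f i : Set P))) ∧ x = ∑ i, chi (f i)} ∧
    chainPolytope P (r : ℝ)
      = {x | ∃ f : Fin r → (P → ℝ),
          (∀ i, f i ∈ chainPolytope P 1) ∧ x = ∑ i, f i} := by
  have hr0 : (r : ℝ) ≠ 0 := by exact_mod_cast hr.ne'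
  have hsecond : chainPolytope P (r : ℝ)
      = {x | ∃ f : Fin r → (P → ℝ),
          (∀ i, f i ∈ chainPolytope P 1) ∧ x = ∑ i, f i} := by
    ext x
    constructor
    · intro hx
      refine ⟨fun _ => (r:ℝ)⁻¹ • x, fun i => ?_, ?_⟩
      · have h := smul_mem_chainPolytope (c := (r:ℝ)⁻¹) (by positivity) hx
        rwa [inv_mul_cancel₀ hr0] at h
      · rw [Finset.sum_const, Finset.card_univ, Fintype.card_fin,
          ← Nat.cast_smul_eq_nsmul ℝ, smul_smul, mul_inv_cancel₀ hr0, one_smul]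
    · rintro ⟨f, hf, rfl⟩
      constructor
      · intro p
        rw [Finset.sum_apply]
        exact Finset.sum_nonneg fun i _ => (hf i).1 p
      · intro C hC
        calc ∑ p ∈ C, (∑ i, f i) p = ∑ i, ∑ p ∈ C, f i p := by
              simp only [Finset.sum_apply]; rw [Finset.sum_comm]
          _ ≤ ∑ _i : Fin r, (1:ℝ) := Finset.sum_le_sum fun i _ => (hf i).2 C hC
          _ = r := by simp
  refine ⟨Set.Subset.antisymm ?_ ?_, hsecond⟩
  · intro x hx
    have hx1 : (r:ℝ)⁻¹ • x ∈ chainPolytope P 1 := by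
      have h := smul_mem_chainPolytope (c := (r:ℝ)⁻¹) (by positivity) hx
      rwa [inv_mul_cancel₀ hr0] at h
    have h := key_aux (Finset.univ.filter (fun p => ((r:ℝ)⁻¹ • x) p ≠ 0)).card
      ((r:ℝ)⁻¹ • x) le_rfl hx1
    have hx_eq : x = (r:ℝ) • ((r:ℝ)⁻¹ • x) := by
      rw [smul_smul, mul_inv_cancel₀ hr0, one_smul]
    rw [hx_eq]
    have hmem : (r:ℝ) • ((r:ℝ)⁻¹ • x) ∈
        (r:ℝ) • (convexHull ℝ
          {y : P → ℝ | ∃ A : Finset P, IsAntichain (· ≤ ·) (A : Set P) ∧ y = chi A}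
          : Set (P → ℝ)) :=
      Set.smul_mem_smul_set h
    rw [← convexHull_smul] at hmem
    refine convexHull_mono ?_ hmem
    rintro _ ⟨y, ⟨A, hA, rfl⟩, rfl⟩
    refine ⟨fun _ => A, fun _ => hA, ?_⟩
    rw [Finset.sum_const, Finset.card_univ, Fintype.card_fin, ← Nat.cast_smul_eq_nsmul ℝ]
  · refine convexHull_min ?_ (chainPolytope_convex _)
    rintro x ⟨f, hf, rfl⟩
    rw [hsecond]
    exact ⟨fun i => chi (f i), fun i => chi_mem_chainPolytope (hf i), rfl⟩
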